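/- Let f : (0,1)^{n-1} → ℝⁿ satisfy the scaling-invariant Hölder bound on every subcube Q of sidelength 1/N: sup_{x,y∈Q} |f(x)-f(y)| ≤ C ( [f]_{s,p;Q}^p )^{1/p} · (1/N)^{s-(n-1)/p} with p = n/s, and assume the total Gagliardo seminorm [f]_{s,p;(0,1)^{n-1}}^p = M < ∞ and s > n/(n+1). Then for the oscillation-sum over any division into N^{n-1} subcubes: Σ_Q (osc_Q f)^n ≤ C M^s N^{(n-1)(1-s)-s} → 0 as N → ∞. Consequently |f((0,1)^{n-1})| = 0 in ℝⁿ. -/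

import Mathlib

open MeasureTheory Set Filter Topology

/-- The open unit cube `(0,1)^d` of `ℝ^d`. -/
def openUnitCube (d : ℕ) : Set (Fin d → ℝ) :=
  Set.univ.pi fun _ => Set.Ioo (0 : ℝ) 1

/-- The subcube of the unit cube of `ℝ^d` of sidelength `1/N` indexed by
`m : Fin d → Fin N`. -/
def subcube (d N : ℕ) (m : Fin d → Fin N) : Set (Fin d → ℝ) :=
  {x | ∀ i, (m i : ℝ) / N ≤ x i ∧ x i ≤ ((m i : ℝ) + 1) / N}

/-- The Gagliardo `(s,p)`-seminorm (raised to the power `p`) of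
`f : ℝ^d → ℝ^n` over a set `S`, with kernel `|x-y|^{-(d+sp)}`. -/
noncomputable def gagliardoP (d n : ℕ) (s p : ℝ)
    (f : (Fin d → ℝ) → (Fin n → ℝ)) (S : Set (Fin d → ℝ)) : ℝ :=
  ∫ z in S ×ˢ S, ‖f z.1 - f z.2‖ ^ p / ‖z.1 - z.2‖ ^ ((d : ℝ) + s * p)

/-- If `f : (0,1)^{n-1} → ℝⁿ` satisfies the scaling-invariant Hölder bound on each subcube
of sidelength `1/N` (with `p = n/s`), its total Gagliardo seminorm is `M < ∞` and
`s > n/(n+1)`, then the oscillation sums satisfy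
`Σ_Q (osc_Q f)^n ≤ C M^s N^{(n-1)(1-s)-s} → 0`, and consequently `|f((0,1)^{n-1})| = 0`
in `ℝⁿ`. -/

lemma subcube_eq_pi (d N : ℕ) (m : Fin d → Fin N) :
    subcube d N m = Set.univ.pi fun i => Set.Icc ((m i : ℝ) / N) (((m i : ℝ) + 1) / N) := by
  ext x
  simp only [subcube, mem_setOf_eq, Set.mem_univ_pi, Set.mem_Icc]

lemma measurableSet_subcube (d N : ℕ) (m : Fin d → Fin N) :
    MeasurableSet (subcube d N m) := by
  rw [subcube_eq_pi]
  exact MeasurableSet.univ_pi fun _ => measurableSet_Icc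

lemma measurableSet_openUnitCube (d : ℕ) : MeasurableSet (openUnitCube d) :=
  MeasurableSet.univ_pi fun _ => measurableSet_Ioo

lemma volume_subcube_inter_eq_zero {d N : ℕ} {m m' : Fin d → Fin N} (h : m ≠ m') :
    volume (subcube d N m ∩ subcube d N m') = 0 := by
  obtain ⟨i, hi⟩ : ∃ i, m i ≠ m' i := by
    by_contra hc; push_neg at hc; exact h (funext hc)
  have hN : 0 < N := (m i).pos
  have hNR : (0:ℝ) < N := by exact_mod_cast hN
  set a : ℝ := max ((m i : ℝ)) ((m' i : ℝ)) / N with ha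
  set b : ℝ := (min ((m i : ℝ)) ((m' i : ℝ)) + 1) / N with hb
  have hsub : subcube d N m ∩ subcube d N m' ⊆
      Set.univ.pi (Function.update (fun _ : Fin d => (Set.univ : Set ℝ)) i (Set.Icc a b)) := by
    intro x ⟨hx1, hx2⟩ j _
    rcases eq_or_ne j i with rfl | hj
    · rw [Function.update_self]
      refine ⟨?_, ?_⟩
      · rw [ha, ← max_div_div_right hNR.le]
        exact max_le (hx1 j).1 (hx2 j).1
      · rw [hb]
        have heq : (min ((m j : ℝ)) ((m' j : ℝ)) + 1) = min ((m j : ℝ) + 1) ((m' j : ℝ) + 1) := by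
          rw [min_add_add_right]
        rw [heq, ← min_div_div_right hNR.le]
        exact le_min (hx1 j).2 (hx2 j).2
    · rw [Function.update_of_ne hj]; trivial
  refine measure_mono_null hsub ?_
  rw [volume_pi_pi]
  refine Finset.prod_eq_zero (Finset.mem_univ i) ?_
  rw [Function.update_self, Real.volume_Icc]
  have hba : b ≤ a := by
    rw [ha, hb, div_le_div_iff_of_pos_right hNR]
    have hne : (m i : ℕ) ≠ (m' i : ℕ) := fun hc => hi (Fin.ext hc)
    have : min (m i : ℕ) (m' i : ℕ) + 1 ≤ max (m i : ℕ) (m' i : ℕ) := by omega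
    calc (min ((m i : ℝ)) ((m' i : ℝ)) + 1)
        = ((min (m i : ℕ) (m' i : ℕ) + 1 : ℕ) : ℝ) := by push_cast [Nat.cast_min]; ring
      _ ≤ ((max (m i : ℕ) (m' i : ℕ) : ℕ) : ℝ) := by exact_mod_cast this
      _ = max ((m i : ℝ)) ((m' i : ℝ)) := by push_cast [Nat.cast_max]; ring
  simp [ENNReal.ofReal_eq_zero, sub_nonpos.mpr hba]

lemma mem_subcube_of_mem_cube {d N : ℕ} (hN : 0 < N) {x : Fin d → ℝ}
    (hx : x ∈ openUnitCube d) : ∃ m : Fin d → Fin N, x ∈ subcube d N m := by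
  have hxi : ∀ i, 0 < x i ∧ x i < 1 := fun i => hx i (mem_univ i)
  have hNR : (0:ℝ) < N := by exact_mod_cast hN
  refine ⟨fun i => ⟨(⌊(N : ℝ) * x i⌋).toNat, ?_⟩, ?_⟩
  · have h1 : (N : ℝ) * x i < N := by nlinarith [(hxi i).1, (hxi i).2]
    have h2 : ⌊(N : ℝ) * x i⌋ < N := Int.floor_lt.mpr (by exact_mod_cast h1)
    omega
  · intro i
    have h0 : (0:ℝ) ≤ (N : ℝ) * x i := mul_nonneg hNR.le (hxi i).1.le
    have hfl : (0:ℤ) ≤ ⌊(N : ℝ) * x i⌋ := Int.floor_nonneg.mpr h0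
    have hcast : (((⌊(N : ℝ) * x i⌋).toNat : ℕ) : ℝ) = ((⌊(N : ℝ) * x i⌋ : ℤ) : ℝ) := by
      exact_mod_cast congrArg Int.cast (Int.toNat_of_nonneg hfl)
    constructor
    · rw [div_le_iff₀ hNR]
      calc (((⌊(N : ℝ) * x i⌋).toNat : ℕ) : ℝ) = ((⌊(N : ℝ) * x i⌋ : ℤ) : ℝ) := hcast
        _ ≤ (N : ℝ) * x i := Int.floor_le _
        _ = x i * N := mul_comm _ _
    · rw [le_div_iff₀ hNR]
      calc x i * N = (N : ℝ) * x i := mul_comm _ _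
        _ ≤ (⌊(N : ℝ) * x i⌋ : ℝ) + 1 := (Int.lt_floor_add_one _).le
        _ = (((⌊(N : ℝ) * x i⌋).toNat : ℕ) : ℝ) + 1 := by rw [hcast]

lemma center_mem {d N : ℕ} (hN : 0 < N) (m : Fin d → Fin N) :
    (fun i => ((m i : ℝ) + 1/2) / N) ∈ subcube d N m ∩ openUnitCube d := by
  have hNR : (0:ℝ) < N := by exact_mod_cast hN
  constructor
  · intro i
    constructor
    · show (m i : ℝ) / N ≤ ((m i : ℝ) + 1/2) / N
      gcongr
      linarith
    · show ((m i : ℝ) + 1/2) / N ≤ ((m i : ℝ) + 1) / N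
      gcongr
      linarith
  · intro i _
    have hm1 : (m i : ℝ) + 1 ≤ (N : ℝ) := by
      have := (m i).is_lt
      exact_mod_cast Nat.succ_le_of_lt this
    refine ⟨?_, ?_⟩
    · show (0:ℝ) < ((m i : ℝ) + 1/2) / N
      positivity
    · show ((m i : ℝ) + 1/2) / N < 1
      rw [div_lt_one hNR]
      linarith

lemma sum_rpow_le_card_rpow_mul {ι : Type*} [Fintype ι] [Nonempty ι] (a : ι → ℝ)
    (ha : ∀ i, 0 ≤ a i) {t : ℝ} (ht0 : 0 < t) (ht1 : t ≤ 1) :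
    ∑ i, a i ^ t ≤ (Fintype.card ι : ℝ) ^ (1 - t) * (∑ i, a i) ^ t := by
  set c : ℝ := (Fintype.card ι : ℝ) with hc
  have hcpos : 0 < c := by
    rw [hc]; exact_mod_cast Fintype.card_pos
  have hw' : ∑ _i : ι, c⁻¹ = 1 := by
    rw [Finset.sum_const, Finset.card_univ, nsmul_eq_mul, ← hc, mul_inv_cancel₀ hcpos.ne']
  have hp1 : (1:ℝ) ≤ 1 / t := by
    rw [le_div_iff₀ ht0]; linarith
  have key := Real.arith_mean_le_rpow_mean Finset.univ (fun _ => c⁻¹) (fun i => a i ^ t)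
    (fun _ _ => by positivity) hw' (fun i _ => Real.rpow_nonneg (ha i) t) hp1
  have hz : ∀ i : ι, (a i ^ t) ^ (1/t) = a i := fun i => by
    rw [← Real.rpow_mul (ha i), mul_one_div_cancel ht0.ne', Real.rpow_one]
  have key2 : c⁻¹ * ∑ i, a i ^ t ≤ (c⁻¹ * ∑ i, a i) ^ t := by
    calc c⁻¹ * ∑ i, a i ^ t = ∑ i, c⁻¹ * a i ^ t := by rw [Finset.mul_sum]
      _ ≤ (∑ i, c⁻¹ * (a i ^ t) ^ (1/t)) ^ (1/(1/t)) := key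
      _ = (c⁻¹ * ∑ i, a i) ^ t := by
          rw [one_div_one_div]
          congr 1
          rw [Finset.mul_sum]
          exact Finset.sum_congr rfl fun i _ => by rw [hz i]
  have hsum0 : 0 ≤ ∑ i, a i := Finset.sum_nonneg fun i _ => ha i
  calc ∑ i, a i ^ t = c * (c⁻¹ * ∑ i, a i ^ t) := by
        field_simp
    _ ≤ c * (c⁻¹ * ∑ i, a i) ^ t := mul_le_mul_of_nonneg_left key2 hcpos.le
    _ = c ^ (1-t) * (∑ i, a i) ^ t := by
        rw [Real.mul_rpow (inv_nonneg.mpr hcpos.le) hsum0, Real.inv_rpow hcpos.le,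
            Real.rpow_sub hcpos, Real.rpow_one]
        field_simp

lemma sum_setIntegral_le {α : Type*} [MeasurableSpace α] (μ : Measure α) {ι : Type*} [Fintype ι]
    (T : ι → Set α) (U : Set α) (G : α → ℝ) (hG : ∀ x, 0 ≤ G x)
    (hTm : ∀ i, NullMeasurableSet (T i) μ) (hd : Pairwise (Function.onFun (AEDisjoint μ) T))
    (hsub : ∀ i, T i ⊆ U) (hint : IntegrableOn G U μ) :
    ∑ i, ∫ x in T i, G x ∂μ ≤ ∫ x in U, G x ∂μ := by
  have h1 : IntegrableOn G (⋃ i, T i) μ := hint.mono_set (iUnion_subset hsub)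
  have h2 : ∫ x in ⋃ i, T i, G x ∂μ = ∑' i, ∫ x in T i, G x ∂μ :=
    integral_iUnion_ae hTm hd h1
  calc ∑ i, ∫ x in T i, G x ∂μ = ∑' i, ∫ x in T i, G x ∂μ := (tsum_fintype _).symm
    _ = ∫ x in ⋃ i, T i, G x ∂μ := h2.symm
    _ ≤ ∫ x in U, G x ∂μ := by
        apply setIntegral_mono_set hint (Filter.Eventually.of_forall fun x => hG x)
        exact (iUnion_subset hsub).eventuallyLE

theorem stmt18 (n : ℕ) (hn : 2 ≤ n) (s p : ℝ)
    (hs : s ∈ Set.Ioo ((n : ℝ) / ((n : ℝ) + 1)) 1) (hp : p = (n : ℝ) / s)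
    (f : (Fin (n - 1) → ℝ) → (Fin n → ℝ)) (C₀ M : ℝ) (hC₀ : 0 < C₀)
    (hM : gagliardoP (n - 1) n s p f (openUnitCube (n - 1)) = M)
    (hint : IntegrableOn
      (fun z : (Fin (n - 1) → ℝ) × (Fin (n - 1) → ℝ) =>
        ‖f z.1 - f z.2‖ ^ p / ‖z.1 - z.2‖ ^ (((n : ℝ) - 1) + s * p))
      (openUnitCube (n - 1) ×ˢ openUnitCube (n - 1)))
    (hhold : ∀ N : ℕ, 0 < N → ∀ m : Fin (n - 1) → Fin N,
      ∀ x ∈ subcube (n - 1) N m ∩ openUnitCube (n - 1),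
      ∀ y ∈ subcube (n - 1) N m ∩ openUnitCube (n - 1),
        ‖f x - f y‖ ≤
          C₀ * (gagliardoP (n - 1) n s p f (subcube (n - 1) N m ∩ openUnitCube (n - 1)))
              ^ (1 / p) * ((1 : ℝ) / N) ^ (s - ((n : ℝ) - 1) / p)) :
    (∃ C > (0 : ℝ), ∀ N : ℕ, 0 < N →
      ∑ m : Fin (n - 1) → Fin N,
          (Metric.diam (f '' (subcube (n - 1) N m ∩ openUnitCube (n - 1)))) ^ n ≤
        C * M ^ s * (N : ℝ) ^ (((n : ℝ) - 1) * (1 - s) - s)) ∧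
    volume (f '' openUnitCube (n - 1)) = 0 := by
  have hn1 : 1 ≤ n := by omega
  have hnR : (2:ℝ) ≤ (n:ℝ) := by exact_mod_cast hn
  have hnpos : (0:ℝ) < n := by linarith
  have hcast : ((n - 1 : ℕ) : ℝ) = (n : ℝ) - 1 := by
    rw [Nat.cast_sub hn1, Nat.cast_one]
  obtain ⟨hs0', hs1⟩ := hs
  have hs0 : 0 < s := lt_of_le_of_lt (by positivity) hs0'
  have hppos : 0 < p := by rw [hp]; positivity
  have hps : 1 / p = s / (n:ℝ) := by rw [hp, one_div_div]
  have hexp : s - ((n:ℝ) - 1) / p = s / n := by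
    rw [hp]
    field_simp
    ring
  set U := openUnitCube (n - 1) with hU
  set G : (Fin (n-1) → ℝ) × (Fin (n-1) → ℝ) → ℝ :=
    fun z => ‖f z.1 - f z.2‖ ^ p / ‖z.1 - z.2‖ ^ (((n : ℝ) - 1) + s * p) with hG
  have hGnonneg : ∀ z, 0 ≤ G z := fun z =>
    div_nonneg (Real.rpow_nonneg (norm_nonneg _) _) (Real.rpow_nonneg (norm_nonneg _) _)
  have hgag : ∀ S : Set (Fin (n-1) → ℝ),
      gagliardoP (n - 1) n s p f S = ∫ z in S ×ˢ S, G z := by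
    intro S
    simp only [gagliardoP, hG, hcast]
  have hg0 : ∀ {S : Set (Fin (n-1) → ℝ)}, 0 ≤ gagliardoP (n-1) n s p f S := by
    intro S
    rw [hgag]
    exact integral_nonneg fun z => hGnonneg z
  have hM0 : 0 ≤ M := hM ▸ hg0
  -- superadditivity
  have hsumg : ∀ N : ℕ, 0 < N →
      ∑ m : Fin (n-1) → Fin N, gagliardoP (n-1) n s p f (subcube (n-1) N m ∩ U) ≤ M := by
    intro N hN
    rw [← hM]
    simp only [hgag]
    refine sum_setIntegral_le volume
      (fun m => (subcube (n-1) N m ∩ U) ×ˢ (subcube (n-1) N m ∩ U)) (U ×ˢ U) G hGnonneg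
      ?_ ?_ ?_ hint
    · intro m
      exact (((measurableSet_subcube _ _ _).inter (measurableSet_openUnitCube _)).prod
        ((measurableSet_subcube _ _ _).inter (measurableSet_openUnitCube _))).nullMeasurableSet
    · intro m m' hmm'
      have h0 : volume ((subcube (n-1) N m ∩ U) ∩ (subcube (n-1) N m' ∩ U)) = 0 :=
        measure_mono_null (Set.inter_subset_inter Set.inter_subset_left Set.inter_subset_left)
          (volume_subcube_inter_eq_zero hmm')
      have hgoal : volume (((subcube (n-1) N m ∩ U) ×ˢ (subcube (n-1) N m ∩ U)) ∩
          ((subcube (n-1) N m' ∩ U) ×ˢ (subcube (n-1) N m' ∩ U))) = 0 := by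
        rw [Set.prod_inter_prod, Measure.volume_eq_prod, Measure.prod_prod, h0, mul_zero]
      exact hgoal
    · intro m
      exact Set.prod_mono inter_subset_right inter_subset_right
  -- per-cube power computation
  have hBpow : ∀ N : ℕ, 0 < N → ∀ m : Fin (n-1) → Fin N,
      (C₀ * (gagliardoP (n-1) n s p f (subcube (n-1) N m ∩ U)) ^ (1/p)
        * ((1:ℝ)/N) ^ (s - ((n:ℝ)-1)/p)) ^ n
      = C₀ ^ n * (gagliardoP (n-1) n s p f (subcube (n-1) N m ∩ U)) ^ s * ((1:ℝ)/N) ^ s := by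
    intro N hN m
    have hN0 : (0:ℝ) ≤ 1/(N:ℝ) := by positivity
    rw [hps, hexp, mul_pow, mul_pow]
    congr 1
    · congr 1
      rw [← Real.rpow_natCast ((gagliardoP (n-1) n s p f (subcube (n-1) N m ∩ U)) ^ (s / (n:ℝ))) n,
        ← Real.rpow_mul hg0, div_mul_cancel₀ _ (ne_of_gt hnpos)]
    · rw [← Real.rpow_natCast (((1:ℝ)/(N:ℝ)) ^ (s / (n:ℝ))) n, ← Real.rpow_mul hN0,
        div_mul_cancel₀ _ (ne_of_gt hnpos)]
  -- the main sum estimate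
  have hmain : ∀ N : ℕ, 0 < N →
      ∑ m : Fin (n-1) → Fin N,
        (C₀ * (gagliardoP (n-1) n s p f (subcube (n-1) N m ∩ U)) ^ (1/p)
          * ((1:ℝ)/N) ^ (s - ((n:ℝ)-1)/p)) ^ n
      ≤ C₀ ^ n * M ^ s * (N:ℝ) ^ (((n:ℝ)-1) * (1-s) - s) := by
    intro N hN
    haveI : Nonempty (Fin N) := ⟨⟨0, hN⟩⟩
    have hNR : (0:ℝ) < N := by exact_mod_cast hN
    have hcard : ((Fintype.card (Fin (n-1) → Fin N) : ℕ) : ℝ) = ((N:ℝ)) ^ (n-1 : ℕ) := by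
      rw [Fintype.card_fun, Fintype.card_fin, Fintype.card_fin]
      push_cast
      ring
    have hN0 : (0:ℝ) ≤ 1/(N:ℝ) := by positivity
    calc ∑ m : Fin (n-1) → Fin N,
          (C₀ * (gagliardoP (n-1) n s p f (subcube (n-1) N m ∩ U)) ^ (1/p)
            * ((1:ℝ)/N) ^ (s - ((n:ℝ)-1)/p)) ^ n
        = ∑ m : Fin (n-1) → Fin N,
          C₀ ^ n * (gagliardoP (n-1) n s p f (subcube (n-1) N m ∩ U)) ^ s * ((1:ℝ)/N) ^ s :=
          Finset.sum_congr rfl fun m _ => hBpow N hN m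
      _ = C₀ ^ n * ((1:ℝ)/N) ^ s *
          ∑ m : Fin (n-1) → Fin N, (gagliardoP (n-1) n s p f (subcube (n-1) N m ∩ U)) ^ s := by
          rw [Finset.mul_sum]
          exact Finset.sum_congr rfl fun m _ => by ring
      _ ≤ C₀ ^ n * ((1:ℝ)/N) ^ s *
          (((Fintype.card (Fin (n-1) → Fin N) : ℕ) : ℝ) ^ (1 - s) *
            (∑ m : Fin (n-1) → Fin N, gagliardoP (n-1) n s p f (subcube (n-1) N m ∩ U)) ^ s) := by
          refine mul_le_mul_of_nonneg_left ?_ (by positivity)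
          exact sum_rpow_le_card_rpow_mul _ (fun m => hg0) hs0 hs1.le
      _ ≤ C₀ ^ n * ((1:ℝ)/N) ^ s *
          (((Fintype.card (Fin (n-1) → Fin N) : ℕ) : ℝ) ^ (1 - s) * M ^ s) := by
          refine mul_le_mul_of_nonneg_left (mul_le_mul_of_nonneg_left ?_ ?_) (by positivity)
          · exact Real.rpow_le_rpow (Finset.sum_nonneg fun m _ => hg0) (hsumg N hN) hs0.le
          · exact Real.rpow_nonneg (by positivity) _
      _ = C₀ ^ n * M ^ s * (N:ℝ) ^ (((n:ℝ)-1) * (1-s) - s) := by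
          rw [hcard]
          have key2 : ((1:ℝ)/N) ^ s * (((N:ℝ)) ^ (n-1 : ℕ)) ^ (1-s)
              = (N:ℝ) ^ (((n:ℝ)-1) * (1-s) - s) := by
            rw [one_div, Real.inv_rpow hNR.le, ← Real.rpow_neg hNR.le,
              ← Real.rpow_natCast (N:ℝ) (n-1), ← Real.rpow_mul hNR.le,
              ← Real.rpow_add hNR, hcast]
            congr 1
            ring
          rw [← key2]
          ring
  -- diameter bound
  have hdiam : ∀ N : ℕ, 0 < N → ∀ m : Fin (n-1) → Fin N,
      Metric.diam (f '' (subcube (n-1) N m ∩ U)) ≤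
        C₀ * (gagliardoP (n-1) n s p f (subcube (n-1) N m ∩ U)) ^ (1/p)
          * ((1:ℝ)/N) ^ (s - ((n:ℝ)-1)/p) := by
    intro N hN m
    have hB0 : 0 ≤ C₀ * (gagliardoP (n-1) n s p f (subcube (n-1) N m ∩ U)) ^ (1/p)
        * ((1:ℝ)/N) ^ (s - ((n:ℝ)-1)/p) :=
      mul_nonneg (mul_nonneg hC₀.le (Real.rpow_nonneg hg0 _))
        (Real.rpow_nonneg (by positivity) _)
    refine Metric.diam_le_of_forall_dist_le hB0 ?_
    rintro y ⟨x, hx, rfl⟩ y' ⟨x', hx', rfl⟩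
    rw [dist_eq_norm]
    exact hhold N hN m x hx x' hx'
  -- part 1
  have part1 : ∀ N : ℕ, 0 < N →
      ∑ m : Fin (n - 1) → Fin N,
          (Metric.diam (f '' (subcube (n - 1) N m ∩ U))) ^ n ≤
        C₀ ^ n * M ^ s * (N : ℝ) ^ (((n : ℝ) - 1) * (1 - s) - s) := by
    intro N hN
    refine le_trans (Finset.sum_le_sum fun m _ => ?_) (hmain N hN)
    exact pow_le_pow_left₀ Metric.diam_nonneg (hdiam N hN m) n
  refine ⟨⟨C₀ ^ n, pow_pos hC₀ n, part1⟩, ?_⟩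
  -- part 2
  set K : ℝ := 2 ^ n * (C₀ ^ n * M ^ s) with hK
  have hcover : ∀ N : ℕ, 0 < N → volume (f '' U) ≤
      ENNReal.ofReal (K * (N:ℝ) ^ (((n:ℝ)-1) * (1-s) - s)) := by
    intro N hN
    have himg : f '' U ⊆ ⋃ m : Fin (n-1) → Fin N, f '' (subcube (n-1) N m ∩ U) := by
      rintro y ⟨x, hx, rfl⟩
      obtain ⟨m, hm⟩ := mem_subcube_of_mem_cube hN hx
      exact mem_iUnion.mpr ⟨m, ⟨x, ⟨hm, hx⟩, rfl⟩⟩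
    have hvol_piece : ∀ m : Fin (n-1) → Fin N,
        volume (f '' (subcube (n-1) N m ∩ U)) ≤
          ENNReal.ofReal ((2 * (C₀ * (gagliardoP (n-1) n s p f (subcube (n-1) N m ∩ U)) ^ (1/p)
            * ((1:ℝ)/N) ^ (s - ((n:ℝ)-1)/p))) ^ n) := by
      intro m
      set Bv := C₀ * (gagliardoP (n-1) n s p f (subcube (n-1) N m ∩ U)) ^ (1/p)
        * ((1:ℝ)/N) ^ (s - ((n:ℝ)-1)/p) with hBv
      have hB0 : 0 ≤ Bv :=
        mul_nonneg (mul_nonneg hC₀.le (Real.rpow_nonneg hg0 _))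
          (Real.rpow_nonneg (by positivity) _)
      set x₀ : Fin (n-1) → ℝ := fun i => ((m i : ℝ) + 1/2)/N with hx₀def
      have hx₀ : x₀ ∈ subcube (n-1) N m ∩ U := center_mem hN m
      have hsub : f '' (subcube (n-1) N m ∩ U) ⊆
          Set.Icc (fun i => f x₀ i - Bv) (fun i => f x₀ i + Bv) := by
        rintro y ⟨x, hx, rfl⟩
        have hb : ‖f x - f x₀‖ ≤ Bv := hhold N hN m x hx x₀ hx₀
        rw [Set.mem_Icc]
        constructor <;> intro i <;>
        · have hcoord : |f x i - f x₀ i| ≤ Bv := by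
            calc |f x i - f x₀ i| = ‖(f x - f x₀) i‖ := by simp [Real.norm_eq_abs]
              _ ≤ ‖f x - f x₀‖ := norm_le_pi_norm _ i
              _ ≤ Bv := hb
          have := abs_le.mp hcoord
          simp only []
          linarith [this.1, this.2]
      calc volume (f '' (subcube (n-1) N m ∩ U))
          ≤ volume (Set.Icc (fun i => f x₀ i - Bv) (fun i => f x₀ i + Bv)) := measure_mono hsub
        _ = ∏ _i : Fin n, ENNReal.ofReal (2 * Bv) := by
            rw [Real.volume_Icc_pi]
            exact Finset.prod_congr rfl fun i _ => by norm_num; ring_nf; rw [ENNReal.ofReal_mul' (by norm_num), ENNReal.ofReal_ofNat]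
        _ = ENNReal.ofReal (2 * Bv) ^ n := by
            rw [Finset.prod_const, Finset.card_univ, Fintype.card_fin]
        _ = ENNReal.ofReal ((2 * Bv) ^ n) := (ENNReal.ofReal_pow (by positivity) n).symm
    calc volume (f '' U)
        ≤ volume (⋃ m : Fin (n-1) → Fin N, f '' (subcube (n-1) N m ∩ U)) := measure_mono himg
      _ ≤ ∑' m : Fin (n-1) → Fin N, volume (f '' (subcube (n-1) N m ∩ U)) := measure_iUnion_le _
      _ = ∑ m : Fin (n-1) → Fin N, volume (f '' (subcube (n-1) N m ∩ U)) := tsum_fintype _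
      _ ≤ ∑ m : Fin (n-1) → Fin N,
            ENNReal.ofReal ((2 * (C₀ * (gagliardoP (n-1) n s p f (subcube (n-1) N m ∩ U)) ^ (1/p)
              * ((1:ℝ)/N) ^ (s - ((n:ℝ)-1)/p))) ^ n) :=
          Finset.sum_le_sum fun m _ => hvol_piece m
      _ = ENNReal.ofReal (∑ m : Fin (n-1) → Fin N,
            (2 * (C₀ * (gagliardoP (n-1) n s p f (subcube (n-1) N m ∩ U)) ^ (1/p)
              * ((1:ℝ)/N) ^ (s - ((n:ℝ)-1)/p))) ^ n) := by
          rw [ENNReal.ofReal_sum_of_nonneg]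
          intro m _
          have hB0 : 0 ≤ C₀ * (gagliardoP (n-1) n s p f (subcube (n-1) N m ∩ U)) ^ (1/p)
              * ((1:ℝ)/N) ^ (s - ((n:ℝ)-1)/p) :=
            mul_nonneg (mul_nonneg hC₀.le (Real.rpow_nonneg hg0 _))
              (Real.rpow_nonneg (by positivity) _)
          positivity
      _ ≤ ENNReal.ofReal (K * (N:ℝ) ^ (((n:ℝ)-1) * (1-s) - s)) := by
          refine ENNReal.ofReal_le_ofReal ?_
          have heq : ∑ m : Fin (n-1) → Fin N,
              (2 * (C₀ * (gagliardoP (n-1) n s p f (subcube (n-1) N m ∩ U)) ^ (1/p)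
                * ((1:ℝ)/N) ^ (s - ((n:ℝ)-1)/p))) ^ n
              = 2 ^ n * ∑ m : Fin (n-1) → Fin N,
                (C₀ * (gagliardoP (n-1) n s p f (subcube (n-1) N m ∩ U)) ^ (1/p)
                  * ((1:ℝ)/N) ^ (s - ((n:ℝ)-1)/p)) ^ n := by
            rw [Finset.mul_sum]
            exact Finset.sum_congr rfl fun m _ => by rw [mul_pow]
          rw [heq, hK]
          have := hmain N hN
          nlinarith [this, pow_pos (show (0:ℝ) < 2 by norm_num) n]
  have hδ : 0 < s - ((n:ℝ)-1) * (1-s) := by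
    have hpos : (0:ℝ) < (n:ℝ) + 1 := by linarith
    have h' : (n:ℝ) < s * ((n:ℝ) + 1) := (div_lt_iff₀ hpos).mp hs0'
    nlinarith [h', hs1]
  have h1 : Tendsto (fun N : ℕ => ((N:ℝ)) ^ (((n:ℝ)-1) * (1-s) - s)) atTop (𝓝 0) := by
    have h2 := (tendsto_rpow_neg_atTop hδ).comp (tendsto_natCast_atTop_atTop (R := ℝ))
    have heq : (fun N : ℕ => ((N:ℝ)) ^ (((n:ℝ)-1) * (1-s) - s)) =
        (fun x : ℝ => x ^ (-(s - ((n:ℝ)-1)*(1-s)))) ∘ (Nat.cast : ℕ → ℝ) := by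
      funext N
      simp only [Function.comp]
      congr 1
      ring
    rw [heq]
    exact h2
  have htend : Tendsto (fun N : ℕ => ENNReal.ofReal (K * (N:ℝ) ^ (((n:ℝ)-1) * (1-s) - s)))
      atTop (𝓝 0) := by
    have h3 : Tendsto (fun N : ℕ => K * (N:ℝ) ^ (((n:ℝ)-1) * (1-s) - s)) atTop (𝓝 0) := by
      have := h1.const_mul K
      simpa using this
    have h4 := (ENNReal.continuous_ofReal.tendsto 0).comp h3
    rw [ENNReal.ofReal_zero] at h4
    exact h4
  have hle : volume (f '' U) ≤ 0 :=
    ge_of_tendsto htend (eventually_atTop.mpr ⟨1, fun N hN => hcover N hN⟩)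
  exact le_antisymm hle (zero_le)
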